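/- Let $\sfZ$ be a Markov transition kernel on a countable space $\mathcal{Z}$ with transition matrix $\Pi$, let $\Phi:\mathcal{Z}\to\mathcal{X}$ be a function to a countable space $\mathcal{X}$, let $P$ be a Markov transition matrix on $\mathcal{X}$, and let $K:\mathcal{X}\times\mathcal{Z}\to[0,1]$ satisfy: (i) for every $x\in\mathcal{X}$, $\sum_{z:\Phi(z)=x} K(x,z)=1$ and $K(x,z)=0$ whenever $\Phi(z)\ne x$; (ii) $K\Pi = PK$. If the Markov chain $(Z_n)$ on $\mathcal{Z}$ has initial distribution $K(x,\cdot)$, then the process $X_n := \Phi(Z_n)$ is a Markov chain with respect to its own filtration, with transition matrix $P$ and initial state $x$. -/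

import Mathlib

open scoped ENNReal Classical

/-- The Pitman–Rogers criterion (discrete time, countable state spaces):
if the intertwining `KΠ = PK` holds and the kernel `K(x,·)` is supported on
`Φ⁻¹(x)`, then for the chain with transition matrix `Π` started from the
distribution `K(x,·)`, the image process `Φ(Z_n)` is a Markov chain with
transition matrix `P` started at `x` — expressed through the equality of all
its finite-dimensional distributions with those of the `P`-chain. -/
theorem pitman_rogers {𝒵 𝒳 : Type*} [Countable 𝒵] [Countable 𝒳]
    (Pi : 𝒵 → 𝒵 → ℝ≥0∞) (P : 𝒳 → 𝒳 → ℝ≥0∞) (K : 𝒳 → 𝒵 → ℝ≥0∞)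
    (Φ : 𝒵 → 𝒳)
    (hPi : ∀ z, ∑' z', Pi z z' = 1)
    (hP : ∀ x, ∑' x', P x x' = 1)
    (hKsum : ∀ x, ∑' z, K x z = 1)
    (hKsupp : ∀ x z, Φ z ≠ x → K x z = 0)
    (hinter : ∀ x z', ∑' z, K x z * Pi z z' = ∑' x', P x x' * K x' z')
    (x : 𝒳) :
    ∀ (m : ℕ) (xs : Fin (m + 1) → 𝒳),
      (∑' zs : Fin (m + 1) → 𝒵,
          K x (zs 0) *
            (∏ k : Fin (m + 1), if Φ (zs k) = xs k then (1 : ℝ≥0∞) else 0) *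
            ∏ k : Fin m, Pi (zs k.castSucc) (zs k.succ)) =
        (if xs 0 = x then (1 : ℝ≥0∞) else 0) *
          ∏ k : Fin m, P (xs k.castSucc) (xs k.succ) := by
  -- one-step lemma
  have step : ∀ (y x' : 𝒳) (z : 𝒵),
      (∑' z', K y z' * Pi z' z) * (if Φ z = x' then (1 : ℝ≥0∞) else 0)
        = P y x' * K x' z := by
    intro y x' z
    by_cases h : Φ z = x'
    · subst h
      rw [if_pos rfl, mul_one, hinter]
      exact tsum_eq_single (Φ z) (fun b hb => by rw [hKsupp b z (Ne.symm hb), mul_zero])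
    · rw [if_neg h, mul_zero, hKsupp x' z h, mul_zero]
  -- strengthened statement carrying the last coordinate
  have aux : ∀ (m : ℕ) (xs : Fin (m + 1) → 𝒳) (z : 𝒵),
      (∑' zs : Fin (m + 1) → 𝒵,
          (K x (zs 0) *
            (∏ k : Fin (m + 1), if Φ (zs k) = xs k then (1 : ℝ≥0∞) else 0) *
            ∏ k : Fin m, Pi (zs k.castSucc) (zs k.succ)) *
            (if zs (Fin.last m) = z then (1 : ℝ≥0∞) else 0)) =
        ((if xs 0 = x then (1 : ℝ≥0∞) else 0) *
          ∏ k : Fin m, P (xs k.castSucc) (xs k.succ)) * K (xs (Fin.last m)) z := by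
    intro m
    induction m with
    | zero =>
      intro xs z
      rw [← (Equiv.funUnique (Fin 1) 𝒵).symm.tsum_eq]
      have h1 : ∀ z0 : 𝒵,
          (K x ((Equiv.funUnique (Fin 1) 𝒵).symm z0 0) *
            (∏ k : Fin 1, if Φ ((Equiv.funUnique (Fin 1) 𝒵).symm z0 k) = xs k
              then (1 : ℝ≥0∞) else 0) *
            ∏ k : Fin 0, Pi ((Equiv.funUnique (Fin 1) 𝒵).symm z0 k.castSucc)
              ((Equiv.funUnique (Fin 1) 𝒵).symm z0 k.succ)) *
            (if (Equiv.funUnique (Fin 1) 𝒵).symm z0 (Fin.last 0) = z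
              then (1 : ℝ≥0∞) else 0)
          = (K x z0 * (if Φ z0 = xs 0 then (1 : ℝ≥0∞) else 0)) *
              (if z0 = z then (1 : ℝ≥0∞) else 0) := by
        intro z0
        simp [uniqueElim_const]
      rw [tsum_congr h1,
        tsum_eq_single z (fun b hb => by rw [if_neg hb, mul_zero]), if_pos rfl, mul_one]
      have hlast : xs (Fin.last 0) = xs 0 := by congr
      simp only [Finset.univ_eq_empty, Finset.prod_empty, mul_one, hlast]
      by_cases h : Φ z = xs 0
      · by_cases h2 : xs 0 = x
        · rw [if_pos h, if_pos h2, mul_one, one_mul, h2]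
        · rw [if_pos h, if_neg h2, mul_one, zero_mul]
          exact hKsupp x z (fun hc => h2 (h ▸ hc))
      · rw [if_neg h, mul_zero, hKsupp (xs 0) z h, mul_zero]
    | succ m ih =>
      intro xs z
      rw [← (Fin.snocEquiv (fun _ : Fin (m + 2) => 𝒵)).tsum_eq, ENNReal.tsum_prod']
      have hsnoc0 : ∀ (zs' : Fin (m + 1) → 𝒵) (zl : 𝒵),
          Fin.snoc (α := fun _ : Fin (m + 2) => 𝒵) zs' zl 0 = zs' 0 := fun zs' zl =>
        show Fin.snoc (α := fun _ : Fin (m + 2) => 𝒵) zs' zl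
            (Fin.castSucc 0) = zs' 0 from Fin.snoc_castSucc (α := fun _ : Fin (m + 2) => 𝒵) zl zs' 0
      have split : ∀ (zl : 𝒵) (zs' : Fin (m + 1) → 𝒵),
          (K x ((Fin.snocEquiv (fun _ : Fin (m + 2) => 𝒵)) (zl, zs') 0) *
            (∏ k : Fin (m + 2),
              if Φ ((Fin.snocEquiv (fun _ : Fin (m + 2) => 𝒵)) (zl, zs') k) = xs k
                then (1 : ℝ≥0∞) else 0) *
            ∏ k : Fin (m + 1),
              Pi ((Fin.snocEquiv (fun _ : Fin (m + 2) => 𝒵)) (zl, zs') k.castSucc)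
                ((Fin.snocEquiv (fun _ : Fin (m + 2) => 𝒵)) (zl, zs') k.succ)) *
            (if (Fin.snocEquiv (fun _ : Fin (m + 2) => 𝒵)) (zl, zs') (Fin.last (m + 1)) = z
              then (1 : ℝ≥0∞) else 0)
          = ((K x (zs' 0) *
              (∏ k : Fin (m + 1), if Φ (zs' k) = xs k.castSucc then (1 : ℝ≥0∞) else 0) *
              ∏ k : Fin m, Pi (zs' k.castSucc) (zs' k.succ)) *
              (Pi (zs' (Fin.last m)) zl *
                (if Φ zl = xs (Fin.last (m + 1)) then (1 : ℝ≥0∞) else 0))) *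
            (if zl = z then (1 : ℝ≥0∞) else 0) := by
        intro zl zs'
        simp only [Fin.snocEquiv, Equiv.coe_fn_mk]
        rw [Fin.prod_univ_castSucc (n := m + 1),
          Fin.prod_univ_castSucc
            (f := fun k : Fin (m + 1) =>
              Pi (Fin.snoc (α := fun _ : Fin (m + 2) => 𝒵) zs' zl k.castSucc)
                (Fin.snoc (α := fun _ : Fin (m + 2) => 𝒵) zs' zl k.succ))]
        simp only [Fin.snoc_castSucc, Fin.snoc_last, hsnoc0, Fin.succ_castSucc, Fin.succ_last]
        ring
      rw [tsum_congr fun zl => tsum_congr fun zs' => split zl zs']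
      rw [tsum_eq_single z (fun b hb => by simp [if_neg hb])]
      simp only [eq_self_iff_true, if_true, mul_one]
      have step2 : ∀ zs' : Fin (m + 1) → 𝒵,
          (K x (zs' 0) *
              (∏ k : Fin (m + 1), if Φ (zs' k) = xs k.castSucc then (1 : ℝ≥0∞) else 0) *
              ∏ k : Fin m, Pi (zs' k.castSucc) (zs' k.succ)) *
            (Pi (zs' (Fin.last m)) z *
              (if Φ z = xs (Fin.last (m + 1)) then (1 : ℝ≥0∞) else 0))
          = ∑' w : 𝒵,
              ((K x (zs' 0) *
                (∏ k : Fin (m + 1), if Φ (zs' k) = xs k.castSucc then (1 : ℝ≥0∞) else 0) *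
                ∏ k : Fin m, Pi (zs' k.castSucc) (zs' k.succ)) *
                (if zs' (Fin.last m) = w then (1 : ℝ≥0∞) else 0)) *
              (Pi w z * (if Φ z = xs (Fin.last (m + 1)) then (1 : ℝ≥0∞) else 0)) := by
        intro zs'
        rw [tsum_eq_single (zs' (Fin.last m))
          (fun b hb => by rw [if_neg (fun h => hb h.symm), mul_zero, zero_mul]),
          if_pos rfl, mul_one]
      rw [tsum_congr step2, ENNReal.tsum_comm]
      have inner : ∀ w : 𝒵,
          (∑' zs' : Fin (m + 1) → 𝒵,
            ((K x (zs' 0) *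
              (∏ k : Fin (m + 1), if Φ (zs' k) = xs k.castSucc then (1 : ℝ≥0∞) else 0) *
              ∏ k : Fin m, Pi (zs' k.castSucc) (zs' k.succ)) *
              (if zs' (Fin.last m) = w then (1 : ℝ≥0∞) else 0)) *
              (Pi w z * (if Φ z = xs (Fin.last (m + 1)) then (1 : ℝ≥0∞) else 0)))
          = (((if xs 0 = x then (1 : ℝ≥0∞) else 0) *
              ∏ k : Fin m, P (xs k.castSucc.castSucc) (xs k.succ.castSucc)) *
              K (xs (Fin.last m).castSucc) w) *
              (Pi w z * (if Φ z = xs (Fin.last (m + 1)) then (1 : ℝ≥0∞) else 0)) := by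
        intro w
        rw [ENNReal.tsum_mul_right]
        congr 1
        have := ih (fun k => xs k.castSucc) w
        simp only [Fin.castSucc_zero] at this
        exact this
      rw [tsum_congr inner]
      have rearr : ∀ w : 𝒵,
          (((if xs 0 = x then (1 : ℝ≥0∞) else 0) *
              ∏ k : Fin m, P (xs k.castSucc.castSucc) (xs k.succ.castSucc)) *
              K (xs (Fin.last m).castSucc) w) *
              (Pi w z * (if Φ z = xs (Fin.last (m + 1)) then (1 : ℝ≥0∞) else 0))
          = ((if xs 0 = x then (1 : ℝ≥0∞) else 0) *
              ∏ k : Fin m, P (xs k.castSucc.castSucc) (xs k.succ.castSucc)) *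
              ((K (xs (Fin.last m).castSucc) w * Pi w z) *
                (if Φ z = xs (Fin.last (m + 1)) then (1 : ℝ≥0∞) else 0)) := by
        intro w; ring
      rw [tsum_congr rearr, ENNReal.tsum_mul_left, ENNReal.tsum_mul_right,
        step (xs (Fin.last m).castSucc) (xs (Fin.last (m + 1))) z]
      rw [Fin.prod_univ_castSucc (f := fun k : Fin (m + 1) => P (xs k.castSucc) (xs k.succ))]
      simp only [Fin.succ_castSucc, Fin.succ_last]
      ring
  -- conclude
  intro m xs
  have expand : ∀ zs : Fin (m + 1) → 𝒵,
      K x (zs 0) *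
        (∏ k : Fin (m + 1), if Φ (zs k) = xs k then (1 : ℝ≥0∞) else 0) *
        ∏ k : Fin m, Pi (zs k.castSucc) (zs k.succ)
      = ∑' z : 𝒵,
        (K x (zs 0) *
          (∏ k : Fin (m + 1), if Φ (zs k) = xs k then (1 : ℝ≥0∞) else 0) *
          ∏ k : Fin m, Pi (zs k.castSucc) (zs k.succ)) *
          (if zs (Fin.last m) = z then (1 : ℝ≥0∞) else 0) := by
    intro zs
    rw [tsum_eq_single (zs (Fin.last m))
      (fun b hb => by rw [if_neg (fun h => hb h.symm), mul_zero]), if_pos rfl, mul_one]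
  rw [tsum_congr expand, ENNReal.tsum_comm, tsum_congr (fun z => aux m xs z),
    ENNReal.tsum_mul_left, hKsum, mul_one]
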